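/- Let g_1,…,g_T be admissible revenue functions with base prices p_t = g_t'(0) ∈ [m,M], let π ≥ 1, and let v̄_1,…,v̄_T be a CR-Pursuit(π) trajectory such that v̄_t ≤ v̂_t for every t, where v̂_t ∈ (0,Δ] is a maximizer of g_t over [0,Δ] with g_t(v̂_t) > 0. Let c ≥ 1 be a constant such that p_t·v̂_t ≤ c·g_t(v̂_t) for all t. Then ∑_{t=1}^T v̄_t ≤ (c·Δ/π)·(ln(M/m)+1). In particular, taking π = c·(ln(M/m)+1), every such CR-Pursuit(π) trajectory satisfies ∑_{t=1}^T v̄_t ≤ Δ, so CR-Pursuit(c·(ln θ + 1)) is feasible and hence c·(ln θ + 1)-competitive. -/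

import Mathlib

open Set

/-- An admissible revenue function on `[0, Δ]` with base price in `[m, M]`. -/
def Admissible (Δ m M : ℝ) (g : ℝ → ℝ) : Prop :=
  ConcaveOn ℝ (Set.Icc 0 Δ) g ∧ MonotoneOn g (Set.Icc 0 Δ) ∧
  (∀ x ∈ Set.Icc (0:ℝ) Δ, DifferentiableAt ℝ g x) ∧
  g 0 = 0 ∧ deriv g 0 ∈ Set.Icc m M

/-- Offline optimum for the first `n` revenue functions with inventory `Δ`. -/
noncomputable def eta (Δ : ℝ) (g : ℕ → ℝ → ℝ) (n : ℕ) : ℝ :=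
  sSup { r : ℝ | ∃ v : ℕ → ℝ, (∀ t < n, 0 ≤ v t) ∧
    (∑ t ∈ Finset.range n, v t) ≤ Δ ∧ r = ∑ t ∈ Finset.range n, g t (v t) }

/-- A CR-Pursuit(π) trajectory for the first T revenue functions. -/
def CRTraj (Δ : ℝ) (g : ℕ → ℝ → ℝ) (T : ℕ) (pi : ℝ) (v : ℕ → ℝ) : Prop :=
  ∀ t < T, v t ∈ Set.Icc 0 Δ ∧ pi * g t (v t) = eta Δ g (t+1) - eta Δ g t

namespace CRP


variable {Δ m M : ℝ} {f : ℝ → ℝ}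

/-- chord inequality: for concave f with f 0 = 0, f a ≥ (a/b) f b for 0 ≤ a ≤ b ≤ Δ. -/
lemma adm_chord (hΔ : 0 < Δ) (hf : Admissible Δ m M f) {a b : ℝ}
    (hb0 : 0 < b) (hbΔ : b ≤ Δ) (ha0 : 0 ≤ a) (hab : a ≤ b) :
    (a / b) * f b ≤ f a := by
  have h0 : (0:ℝ) ∈ Icc 0 Δ := ⟨le_rfl, hΔ.le⟩
  have hbm : b ∈ Icc (0:ℝ) Δ := ⟨hb0.le, hbΔ⟩
  have hw1 : (0:ℝ) ≤ 1 - a / b := by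
    have : a / b ≤ 1 := (div_le_one hb0).2 hab
    linarith
  have hw2 : (0:ℝ) ≤ a / b := div_nonneg ha0 hb0.le
  have hsum : (1 - a / b) + a / b = 1 := by ring
  have := hf.1.2 h0 hbm hw1 hw2 hsum
  have hpt : (1 - a / b) • (0:ℝ) + (a / b) • b = a := by
    rw [smul_eq_mul, smul_eq_mul, mul_zero, zero_add]; exact div_mul_cancel₀ a hb0.ne'
  rw [hpt] at this
  calc (a / b) * f b = (1 - a/b) * f 0 + (a/b) * f b := by rw [hf.2.2.2.1]; ring
    _ ≤ f a := this

/-- linear upper bound: f v ≤ (deriv f 0) * v on [0, Δ]. -/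
lemma adm_le_linear (hΔ : 0 < Δ) (hf : Admissible Δ m M f) {v : ℝ}
    (hv : v ∈ Icc 0 Δ) : f v ≤ deriv f 0 * v := by
  rcases eq_or_lt_of_le hv.1 with h0 | h0
  · simp [← h0, hf.2.2.2.1]
  -- v > 0
  have hd : HasDerivAt f (deriv f 0) 0 := (hf.2.2.1 0 ⟨le_rfl, hΔ.le⟩).hasDerivAt
  have hslope : Filter.Tendsto (slope f 0) (nhdsWithin 0 (Set.Ioi 0)) (nhds (deriv f 0)) := by
    refine (hasDerivAt_iff_tendsto_slope.1 hd).mono_left (nhdsWithin_mono _ ?_)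
    intro x hx
    exact fun hx0 => (ne_of_gt hx) hx0
  have key : f v / v ≤ deriv f 0 := by
    refine ge_of_tendsto hslope ?_
    filter_upwards [Ioo_mem_nhdsGT_of_mem (Set.left_mem_Ico.2 h0)] with ε hε
    have hse : slope f 0 ε = f ε / ε := by
      simp [slope, hf.2.2.2.1, div_eq_inv_mul]
    rw [hse]
    have hεv : ε / v * f v ≤ f ε := adm_chord hΔ hf h0 hv.2 hε.1.le hε.2.le
    rw [div_le_div_iff₀ h0 hε.1]
    have := mul_le_mul_of_nonneg_right hεv (le_of_lt h0)
    have hvne : v ≠ 0 := ne_of_gt h0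
    field_simp at this
    linarith
  calc f v = (f v / v) * v := by field_simp
    _ ≤ deriv f 0 * v := by
        have := mul_le_mul_of_nonneg_right key (le_of_lt h0)
        linarith

lemma adm_nonneg (hf : Admissible Δ m M f) {v : ℝ} (hv : v ∈ Icc 0 Δ) : 0 ≤ f v := by
  have := hf.2.1 (left_mem_Icc.2 (hv.1.trans hv.2)) hv hv.1
  rw [hf.2.2.2.1] at this; exact this


def S (g : ℕ → ℝ → ℝ) (n : ℕ) (x : ℝ) : Set ℝ :=
  { r : ℝ | ∃ v : ℕ → ℝ, (∀ t < n, 0 ≤ v t) ∧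
    (∑ t ∈ Finset.range n, v t) ≤ x ∧ r = ∑ t ∈ Finset.range n, g t (v t) }

noncomputable def E (g : ℕ → ℝ → ℝ) (n : ℕ) (x : ℝ) : ℝ := sSup (S g n x)

variable {Δ m M : ℝ} {g : ℕ → ℝ → ℝ} {n : ℕ} {x y r : ℝ}

lemma zero_mem_S (hadm : ∀ s < n, Admissible Δ m M (g s)) (hx : 0 ≤ x) :
    (0:ℝ) ∈ S g n x := by
  refine ⟨fun _ => 0, fun t ht => le_rfl, by simpa using hx, ?_⟩
  rw [Finset.sum_eq_zero]
  intro t ht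
  exact (hadm t (Finset.mem_range.1 ht)).2.2.2.1

lemma mem_S_elem (hr : r ∈ S g n x) : ∃ v : ℕ → ℝ, (∀ t < n, 0 ≤ v t) ∧
    (∑ t ∈ Finset.range n, v t) ≤ x ∧ r = ∑ t ∈ Finset.range n, g t (v t) := hr

lemma S_le (hΔ : 0 < Δ) (hm : 0 < m) (hmM : m ≤ M)
    (hadm : ∀ s < n, Admissible Δ m M (g s)) (hx : x ≤ Δ)
    (hr : r ∈ S g n x) : r ≤ M * x := by
  obtain ⟨v, hv0, hvs, rfl⟩ := hr
  have hvmem : ∀ t ∈ Finset.range n, v t ∈ Icc (0:ℝ) Δ := by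
    intro t ht
    have h0 := hv0 t (Finset.mem_range.1 ht)
    refine ⟨h0, le_trans ?_ (hvs.trans hx)⟩
    exact Finset.single_le_sum (fun s hs => hv0 s (Finset.mem_range.1 hs)) ht
  calc ∑ t ∈ Finset.range n, g t (v t) ≤ ∑ t ∈ Finset.range n, M * v t := by
        refine Finset.sum_le_sum fun t ht => ?_
        have hadm' := hadm t (Finset.mem_range.1 ht)
        refine le_trans (adm_le_linear hΔ hadm' (hvmem t ht)) ?_
        exact mul_le_mul_of_nonneg_right hadm'.2.2.2.2.2 (hv0 t (Finset.mem_range.1 ht))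
    _ = M * ∑ t ∈ Finset.range n, v t := by rw [Finset.mul_sum]
    _ ≤ M * x := mul_le_mul_of_nonneg_left (hvs) (by linarith)

lemma bddAbove_S (hΔ : 0 < Δ) (hm : 0 < m) (hmM : m ≤ M)
    (hadm : ∀ s < n, Admissible Δ m M (g s)) (hx : x ≤ Δ) :
    BddAbove (S g n x) := ⟨M * x, fun r hr => S_le hΔ hm hmM hadm hx hr⟩

lemma le_E (hΔ : 0 < Δ) (hm : 0 < m) (hmM : m ≤ M)
    (hadm : ∀ s < n, Admissible Δ m M (g s)) (hx : x ≤ Δ)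
    (hr : r ∈ S g n x) : r ≤ E g n x :=
  le_csSup (bddAbove_S hΔ hm hmM hadm hx) hr

lemma E_nonneg (hΔ : 0 < Δ) (hm : 0 < m) (hmM : m ≤ M)
    (hadm : ∀ s < n, Admissible Δ m M (g s)) (hx : x ∈ Icc 0 Δ) :
    0 ≤ E g n x :=
  le_E hΔ hm hmM hadm hx.2 (zero_mem_S hadm hx.1)

lemma E_le_linear (hΔ : 0 < Δ) (hm : 0 < m) (hmM : m ≤ M)
    (hadm : ∀ s < n, Admissible Δ m M (g s)) (hx : x ∈ Icc 0 Δ) :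
    E g n x ≤ M * x :=
  csSup_le ⟨0, zero_mem_S hadm hx.1⟩ (fun r hr => S_le hΔ hm hmM hadm hx.2 hr)

lemma E_zero (hΔ : 0 < Δ) (hm : 0 < m) (hmM : m ≤ M)
    (hadm : ∀ s < n, Admissible Δ m M (g s)) : E g n 0 = 0 := by
  have h1 := E_le_linear hΔ hm hmM hadm (left_mem_Icc.2 hΔ.le)
  have h2 := E_nonneg hΔ hm hmM hadm (left_mem_Icc.2 hΔ.le)
  rw [mul_zero] at h1
  linarith

/-- helper: multiply sSup by nonneg constant -/
lemma mul_sSup_le {A : Set ℝ} (hA : A.Nonempty) {a r : ℝ} (ha : 0 ≤ a)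
    (h : ∀ x ∈ A, a * x ≤ r) : a * sSup A ≤ r := by
  rcases eq_or_lt_of_le ha with h0 | h0
  · obtain ⟨x, hx⟩ := hA
    have := h x hx
    rw [← h0] at *
    simpa using this
  · have : sSup A ≤ r / a := csSup_le hA fun x hx => (le_div_iff₀ h0).2 (by
      rw [mul_comm]; exact h x hx)
    calc a * sSup A ≤ a * (r / a) := mul_le_mul_of_nonneg_left this h0.le
      _ = r := by field_simp

lemma E_combo (hΔ : 0 < Δ) (hm : 0 < m) (hmM : m ≤ M)
    (hadm : ∀ s < n, Admissible Δ m M (g s)) {a b : ℝ}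
    (ha : 0 ≤ a) (hb : 0 ≤ b) (hab : a + b = 1)
    (hx : x ∈ Icc 0 Δ) (hy : y ∈ Icc 0 Δ) :
    a * E g n x + b * E g n y ≤ E g n (a * x + b * y) := by
  have hz : a * x + b * y ∈ Icc (0:ℝ) Δ := by
    constructor
    · exact add_nonneg (mul_nonneg ha hx.1) (mul_nonneg hb hy.1)
    · calc a * x + b * y ≤ a * Δ + b * Δ := by
            exact add_le_add (mul_le_mul_of_nonneg_left hx.2 ha)
              (mul_le_mul_of_nonneg_left hy.2 hb)
        _ = Δ := by rw [← add_mul, hab, one_mul]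
  have key : ∀ r1 ∈ S g n x, ∀ r2 ∈ S g n y, a * r1 + b * r2 ≤ E g n (a * x + b * y) := by
    rintro r1 ⟨v, hv0, hvs, rfl⟩ r2 ⟨w, hw0, hws, rfl⟩
    have hvmem : ∀ t ∈ Finset.range n, v t ∈ Icc (0:ℝ) Δ := by
      intro t ht
      refine ⟨hv0 t (Finset.mem_range.1 ht), le_trans ?_ (hvs.trans hx.2)⟩
      exact Finset.single_le_sum (fun s hs => hv0 s (Finset.mem_range.1 hs)) ht
    have hwmem : ∀ t ∈ Finset.range n, w t ∈ Icc (0:ℝ) Δ := by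
      intro t ht
      refine ⟨hw0 t (Finset.mem_range.1 ht), le_trans ?_ (hws.trans hy.2)⟩
      exact Finset.single_le_sum (fun s hs => hw0 s (Finset.mem_range.1 hs)) ht
    have hmem : (∑ t ∈ Finset.range n, g t (a * v t + b * w t)) ∈ S g n (a * x + b * y) := by
      refine ⟨fun t => a * v t + b * w t, fun t ht => by
        have h1 := hv0 t ht; have h2 := hw0 t ht; positivity, ?_, rfl⟩
      rw [Finset.sum_add_distrib, ← Finset.mul_sum, ← Finset.mul_sum]
      exact add_le_add (mul_le_mul_of_nonneg_left hvs ha)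
        (mul_le_mul_of_nonneg_left hws hb)
    refine le_trans ?_ (le_E hΔ hm hmM hadm hz.2 hmem)
    rw [Finset.mul_sum, Finset.mul_sum, ← Finset.sum_add_distrib]
    refine Finset.sum_le_sum fun t ht => ?_
    have hcv := (hadm t (Finset.mem_range.1 ht)).1.2 (hvmem t ht) (hwmem t ht) ha hb hab
    simpa [smul_eq_mul] using hcv
  have hne1 : (S g n x).Nonempty := ⟨0, zero_mem_S hadm hx.1⟩
  have hne2 : (S g n y).Nonempty := ⟨0, zero_mem_S hadm hy.1⟩
  have step1 : ∀ r1 ∈ S g n x, a * r1 + b * E g n y ≤ E g n (a * x + b * y) := by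
    intro r1 h1
    have : b * E g n y ≤ E g n (a * x + b * y) - a * r1 := by
      refine mul_sSup_le hne2 hb fun r2 h2 => ?_
      linarith [key r1 h1 r2 h2]
    linarith
  have : a * E g n x ≤ E g n (a * x + b * y) - b * E g n y := by
    refine mul_sSup_le hne1 ha fun r1 h1 => ?_
    linarith [step1 r1 h1]
  linarith

end CRP

-- Part 3: hfun and step lemmas
namespace Part3
open CRP

variable {Δ m M : ℝ} {g : ℕ → ℝ → ℝ} {n : ℕ} {x y r lam : ℝ}

noncomputable def hq (Δ : ℝ) (g : ℕ → ℝ → ℝ) (n : ℕ) (lam : ℝ) : ℝ :=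
  sSup {r | ∃ x ∈ Icc (0:ℝ) Δ, r = E g n x - lam * x}

lemma hq_nonempty (hΔ : 0 < Δ) :
    {r | ∃ x ∈ Icc (0:ℝ) Δ, r = E g n x - lam * x}.Nonempty :=
  ⟨E g n 0 - lam * 0, 0, left_mem_Icc.2 hΔ.le, rfl⟩

lemma hq_bddAbove (hΔ : 0 < Δ) (hm : 0 < m) (hmM : m ≤ M)
    (hadm : ∀ s < n, Admissible Δ m M (g s)) :
    BddAbove {r | ∃ x ∈ Icc (0:ℝ) Δ, r = E g n x - lam * x} := by
  refine ⟨M * Δ + |lam| * Δ, ?_⟩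
  rintro r ⟨x, hx, rfl⟩
  have h1 : E g n x ≤ M * x := E_le_linear hΔ hm hmM hadm hx
  have h2 : M * x ≤ M * Δ := mul_le_mul_of_nonneg_left hx.2 (by linarith)
  have h3 : -(lam * x) ≤ |lam| * Δ := by
    calc -(lam * x) ≤ |lam * x| := neg_le_abs _
      _ = |lam| * |x| := abs_mul _ _
      _ ≤ |lam| * Δ := by
          refine mul_le_mul_of_nonneg_left ?_ (abs_nonneg _)
          rw [abs_of_nonneg hx.1]; exact hx.2
  linarith

lemma le_hq (hΔ : 0 < Δ) (hm : 0 < m) (hmM : m ≤ M)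
    (hadm : ∀ s < n, Admissible Δ m M (g s)) (hx : x ∈ Icc 0 Δ) :
    E g n x - lam * x ≤ hq Δ g n lam :=
  le_csSup (hq_bddAbove hΔ hm hmM hadm) ⟨x, hx, rfl⟩

lemma hq_le (hΔ : 0 < Δ) {K : ℝ}
    (h : ∀ x ∈ Icc (0:ℝ) Δ, E g n x - lam * x ≤ K) :
    hq Δ g n lam ≤ K := by
  refine csSup_le (hq_nonempty hΔ) ?_
  rintro r ⟨x, hx, rfl⟩
  exact h x hx

lemma hq_nonneg (hΔ : 0 < Δ) (hm : 0 < m) (hmM : m ≤ M)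
    (hadm : ∀ s < n, Admissible Δ m M (g s)) :
    0 ≤ hq Δ g n lam := by
  have := le_hq (lam := lam) hΔ hm hmM hadm (left_mem_Icc.2 hΔ.le)
  rw [E_zero hΔ hm hmM hadm] at this
  simpa using this

lemma hq_le_MD (hΔ : 0 < Δ) (hm : 0 < m) (hmM : m ≤ M)
    (hadm : ∀ s < n, Admissible Δ m M (g s)) (hl : 0 ≤ lam) :
    hq Δ g n lam ≤ M * Δ := by
  refine hq_le hΔ fun x hx => ?_
  have h1 : E g n x ≤ M * x := E_le_linear hΔ hm hmM hadm hx
  have h2 : M * x ≤ M * Δ := mul_le_mul_of_nonneg_left hx.2 (by linarith)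
  nlinarith [mul_nonneg hl hx.1]

lemma hq_anti (hΔ : 0 < Δ) (hm : 0 < m) (hmM : m ≤ M)
    (hadm : ∀ s < n, Admissible Δ m M (g s)) :
    Antitone (hq Δ g n) := by
  intro lam lam' hll
  refine hq_le hΔ fun x hx => ?_
  have : E g n x - lam' * x ≤ E g n x - lam * x := by
    have := mul_le_mul_of_nonneg_right hll hx.1
    linarith
  exact this.trans (le_hq hΔ hm hmM hadm hx)

/-- extension: appending g n with allocation u. -/
lemma E_succ_extend (hΔ : 0 < Δ) (hm : 0 < m) (hmM : m ≤ M)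
    (hadm : ∀ s < n + 1, Admissible Δ m M (g s)) {u : ℝ} (hu : u ∈ Icc 0 Δ) :
    E g n (Δ - u) + g n u ≤ E g (n+1) Δ := by
  have hadm' : ∀ s < n, Admissible Δ m M (g s) := fun s hs => hadm s (hs.trans n.lt_succ_self)
  have hDu : Δ - u ∈ Icc (0:ℝ) Δ := ⟨by linarith [hu.2], by linarith [hu.1]⟩
  have key : ∀ r' ∈ S g n (Δ - u), r' + g n u ≤ E g (n+1) Δ := by
    rintro r' ⟨w, hw0, hws, rfl⟩
    set w' : ℕ → ℝ := Function.update w n u with hw'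
    have hmem : (∑ t ∈ Finset.range (n+1), g t (w' t)) ∈ S g (n+1) Δ := by
      refine ⟨w', ?_, ?_, rfl⟩
      · intro t ht
        rcases Nat.lt_succ_iff_lt_or_eq.1 ht with h | h
        · rw [hw', Function.update_of_ne (Nat.ne_of_lt h)]
          exact hw0 t h
        · subst h; rw [hw', Function.update_self]; exact hu.1
      · rw [Finset.sum_range_succ]
        have : ∑ t ∈ Finset.range n, w' t = ∑ t ∈ Finset.range n, w t := by
          refine Finset.sum_congr rfl fun t ht => ?_
          rw [hw', Function.update_of_ne (Nat.ne_of_lt (Finset.mem_range.1 ht))]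
        rw [this, hw', Function.update_self]
        linarith
    have hval : ∑ t ∈ Finset.range (n+1), g t (w' t)
        = (∑ t ∈ Finset.range n, g t (w t)) + g n u := by
      rw [Finset.sum_range_succ]
      congr 1
      · refine Finset.sum_congr rfl fun t ht => ?_
        rw [hw', Function.update_of_ne (Nat.ne_of_lt (Finset.mem_range.1 ht))]
      · rw [hw', Function.update_self]
    have := le_E hΔ hm hmM hadm le_rfl (hval ▸ hmem)
    linarith
  have : E g n (Δ - u) ≤ E g (n+1) Δ - g n u := by
    refine csSup_le ⟨0, zero_mem_S hadm' hDu.1⟩ fun r' hr' => ?_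
    linarith [key r' hr']
  linarith

/-- concavity increments -/
lemma E_increments (hΔ : 0 < Δ) (hm : 0 < m) (hmM : m ≤ M)
    (hadm : ∀ s < n, Admissible Δ m M (g s)) {u : ℝ}
    (hu : 0 ≤ u) (hux : u ≤ x) (hx : x ≤ Δ) :
    E g n (x - u) + E g n Δ ≤ E g n x + E g n (Δ - u) := by
  set d := Δ - x + u with hd
  rcases eq_or_lt_of_le (show (0:ℝ) ≤ d by simp [hd]; linarith) with h0 | h0
  · have hu0 : u = 0 := by simp [hd] at h0; linarith
    have hxΔ : x = Δ := by simp [hd] at h0; linarith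
    subst hxΔ; rw [hu0]; simp
  · set s := u / d with hs
    have hs0 : 0 ≤ s := div_nonneg hu h0.le
    have hs1 : s ≤ 1 := by
      rw [hs, div_le_one h0]; simp [hd]; linarith
    have hxu : x - u ∈ Icc (0:ℝ) Δ := ⟨by linarith, by linarith⟩
    have hΔm : Δ ∈ Icc (0:ℝ) Δ := ⟨hΔ.le, le_rfl⟩
    have hsd : s * d = u := by rw [hs]; field_simp
    have c1 := E_combo hΔ hm hmM hadm (by linarith : (0:ℝ) ≤ 1 - s) hs0 (by ring) hxu hΔm
    have c2 := E_combo hΔ hm hmM hadm hs0 (by linarith : (0:ℝ) ≤ 1 - s) (by ring) hxu hΔm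
    have e1 : (1 - s) * (x - u) + s * Δ = x := by
      have : (1-s) * (x-u) + s * Δ = (x - u) + s * d := by rw [hd]; ring
      rw [this, hsd]; ring
    have e2 : s * (x - u) + (1 - s) * Δ = Δ - u := by
      have : s * (x-u) + (1-s) * Δ = Δ - s * d := by rw [hd]; ring
      rw [this, hsd]
    rw [e1] at c1
    rw [e2] at c2
    linarith

/-- supermodularity -/
lemma E_supermod (hΔ : 0 < Δ) (hm : 0 < m) (hmM : m ≤ M)
    (hadm : ∀ s < n + 1, Admissible Δ m M (g s)) (hx : x ∈ Icc 0 Δ) :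
    E g (n+1) x + E g n Δ ≤ E g n x + E g (n+1) Δ := by
  have hadm' : ∀ s < n, Admissible Δ m M (g s) := fun s hs => hadm s (hs.trans n.lt_succ_self)
  have key : ∀ r ∈ S g (n+1) x, r + E g n Δ ≤ E g n x + E g (n+1) Δ := by
    rintro r ⟨v, hv0, hvs, rfl⟩
    set u := v n with hudef
    have hu0 : 0 ≤ u := hv0 n n.lt_succ_self
    have hux : u ≤ x := by
      rw [Finset.sum_range_succ] at hvs
      have : 0 ≤ ∑ t ∈ Finset.range n, v t :=
        Finset.sum_nonneg fun t ht => hv0 t ((Finset.mem_range.1 ht).trans n.lt_succ_self)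
      linarith
    have humem : u ∈ Icc (0:ℝ) Δ := ⟨hu0, hux.trans hx.2⟩
    have hA : (∑ t ∈ Finset.range n, g t (v t)) ∈ S g n (x - u) := by
      refine ⟨v, fun t ht => hv0 t (ht.trans n.lt_succ_self), ?_, rfl⟩
      rw [Finset.sum_range_succ] at hvs
      linarith
    have hAle : (∑ t ∈ Finset.range n, g t (v t)) ≤ E g n (x - u) :=
      le_E hΔ hm hmM hadm' (by linarith [hx.2, hu0] : x - u ≤ Δ) hA
    have hinc := E_increments hΔ hm hmM hadm' hu0 hux hx.2
    have hext := E_succ_extend hΔ hm hmM hadm humem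
    rw [Finset.sum_range_succ]
    linarith
  have : E g (n+1) x ≤ E g n x + E g (n+1) Δ - E g n Δ := by
    refine csSup_le ⟨0, zero_mem_S hadm hx.1⟩ fun r hr => ?_
    linarith [key r hr]
  linarith

/-- step: high λ kills the increment -/
lemma hq_step_high (hΔ : 0 < Δ) (hm : 0 < m) (hmM : m ≤ M)
    (hadm : ∀ s < n + 1, Admissible Δ m M (g s)) (hl : deriv (g n) 0 ≤ lam) :
    hq Δ g (n+1) lam ≤ hq Δ g n lam := by
  have hadm' : ∀ s < n, Admissible Δ m M (g s) := fun s hs => hadm s (hs.trans n.lt_succ_self)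
  refine hq_le hΔ fun x hx => ?_
  have : ∀ r ∈ S g (n+1) x, r - lam * x ≤ hq Δ g n lam := by
    rintro r ⟨v, hv0, hvs, rfl⟩
    set u := v n with hudef
    have hu0 : 0 ≤ u := hv0 n n.lt_succ_self
    have hux : u ≤ x := by
      rw [Finset.sum_range_succ] at hvs
      have : 0 ≤ ∑ t ∈ Finset.range n, v t :=
        Finset.sum_nonneg fun t ht => hv0 t ((Finset.mem_range.1 ht).trans n.lt_succ_self)
      linarith
    have humem : u ∈ Icc (0:ℝ) Δ := ⟨hu0, hux.trans hx.2⟩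
    have hA : (∑ t ∈ Finset.range n, g t (v t)) ∈ S g n (x - u) := by
      refine ⟨v, fun t ht => hv0 t (ht.trans n.lt_succ_self), ?_, rfl⟩
      rw [Finset.sum_range_succ] at hvs
      linarith
    have hAle : (∑ t ∈ Finset.range n, g t (v t)) ≤ E g n (x - u) :=
      le_E hΔ hm hmM hadm' (by linarith [hx.2, hu0] : x - u ≤ Δ) hA
    have hgu : g n u ≤ lam * u := by
      refine le_trans (adm_le_linear hΔ (hadm n n.lt_succ_self) humem) ?_
      exact mul_le_mul_of_nonneg_right hl hu0
    have hxu : x - u ∈ Icc (0:ℝ) Δ := ⟨by linarith, by linarith [hx.2]⟩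
    have hle2 := le_hq (lam := lam) hΔ hm hmM hadm' hxu
    have hring : lam * (x - u) = lam * x - lam * u := by ring
    rw [Finset.sum_range_succ]
    linarith [hle2, hring.ge, hring.le]
  have hEx : E g (n+1) x ≤ hq Δ g n lam + lam * x :=
    csSup_le ⟨0, zero_mem_S hadm hx.1⟩ fun r hr => by linarith [this r hr]
  linarith

lemma hq_step_any (hΔ : 0 < Δ) (hm : 0 < m) (hmM : m ≤ M)
    (hadm : ∀ s < n + 1, Admissible Δ m M (g s)) :
    hq Δ g (n+1) lam ≤ hq Δ g n lam + (E g (n+1) Δ - E g n Δ) := by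
  have hadm' : ∀ s < n, Admissible Δ m M (g s) := fun s hs => hadm s (hs.trans n.lt_succ_self)
  refine hq_le hΔ fun x hx => ?_
  have h1 := E_supermod hΔ hm hmM hadm hx
  have h2 := le_hq (lam := lam) hΔ hm hmM hadm' hx
  linarith

end Part3


-- integral computations
section integrals
open Set intervalIntegral

lemma int_inv_sq {a b : ℝ} (ha : 0 < a) (hab : a ≤ b) :
    ∫ l in Set.Ioc a b, 1 / l^2 = 1/a - 1/b := by
  rw [← intervalIntegral.integral_of_le hab]
  have h0 : (0:ℝ) ∉ uIcc a b := by
    rw [uIcc_of_le hab]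
    rintro ⟨h1, -⟩; linarith
  have hz := integral_zpow (a := a) (b := b) (n := -2) (Or.inr ⟨by norm_num, h0⟩)
  have hcong : ∀ x ∈ uIcc a b, 1 / x^2 = x ^ (-2:ℤ) := by
    intro x hx
    rw [zpow_neg, zpow_two, one_div, sq]
  rw [intervalIntegral.integral_congr hcong, hz]
  have hane : a ≠ 0 := ne_of_gt ha
  have hbne : b ≠ 0 := by intro h; rw [h] at hab; linarith
  rw [show ((-2:ℤ):ℝ) + 1 = -1 by norm_num]
  rw [show (-2:ℤ) + 1 = -1 by norm_num]
  rw [zpow_neg, zpow_neg, zpow_one, zpow_one]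
  field_simp
  ring

lemma int_inv' {a b : ℝ} (ha : 0 < a) (hab : a ≤ b) :
    ∫ l in Set.Ioc a b, l⁻¹ = Real.log (b/a) := by
  rw [← intervalIntegral.integral_of_le hab]
  refine integral_inv ?_
  rw [uIcc_of_le hab]
  rintro ⟨h1, -⟩; linarith

end integrals

-- Part 4: integrals
namespace Part4
open CRP Part3 MeasureTheory

variable {Δ m M : ℝ} {g : ℕ → ℝ → ℝ} {n : ℕ} {lam : ℝ}

/-- generic integrability -/
lemma intOn (hm : 0 < m) {f : ℝ → ℝ} (hf : Measurable f) {C : ℝ} (hC : 0 ≤ C)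
    (hb : ∀ l ∈ Ioc m M, |f l| ≤ C) :
    IntegrableOn (fun l => f l / l^2) (Ioc m M) volume := by
  have hmeas : Measurable fun l => f l / l^2 := hf.div (measurable_id.pow_const 2)
  refine Integrable.mono' (g := fun _ => C / m^2)
    (integrableOn_const measure_Ioc_lt_top.ne) hmeas.aestronglyMeasurable ?_
  rw [ae_restrict_iff' measurableSet_Ioc]
  filter_upwards with l hl
  have hl0 : 0 < l := lt_trans hm hl.1
  have hsq : m^2 ≤ l^2 := by nlinarith [hl.1]
  have : ‖f l / l^2‖ = |f l| / l^2 := by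
    rw [Real.norm_eq_abs, abs_div, abs_of_nonneg (by positivity : (0:ℝ) ≤ l^2)]
  rw [this]
  exact div_le_div₀ hC (hb l hl) (by positivity) hsq

noncomputable def J (Δ m M : ℝ) (g : ℕ → ℝ → ℝ) (n : ℕ) : ℝ :=
  ∫ l in Ioc m M, hq Δ g n l / l^2

lemma hq_meas (hΔ : 0 < Δ) (hm : 0 < m) (hmM : m ≤ M)
    (hadm : ∀ s < n, Admissible Δ m M (g s)) : Measurable (hq Δ g n) :=
  (hq_anti hΔ hm hmM hadm).measurable

lemma hq_intOn (hΔ : 0 < Δ) (hm : 0 < m) (hmM : m ≤ M)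
    (hadm : ∀ s < n, Admissible Δ m M (g s)) :
    IntegrableOn (fun l => hq Δ g n l / l^2) (Ioc m M) volume := by
  have hM : 0 < M := lt_of_lt_of_le hm hmM
  refine intOn hm (hq_meas hΔ hm hmM hadm) (C := M * Δ) (by positivity) fun l hl => ?_
  rw [abs_of_nonneg (hq_nonneg hΔ hm hmM hadm)]
  exact hq_le_MD hΔ hm hmM hadm (le_of_lt (lt_trans hm hl.1))

lemma J_zero (hΔ : 0 < Δ) (hm : 0 < m) (hmM : m ≤ M) : J Δ m M g 0 = 0 := by
  have hadm : ∀ s < 0, Admissible Δ m M (g s) := fun s hs => absurd hs (Nat.not_lt_zero s)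
  have hE0 : ∀ x ∈ Icc (0:ℝ) Δ, E g 0 x = 0 := by
    intro x hx
    refine le_antisymm (csSup_le ⟨0, zero_mem_S hadm hx.1⟩ ?_)
      (le_E hΔ hm hmM hadm hx.2 (zero_mem_S hadm hx.1))
    rintro r ⟨v, -, -, rfl⟩
    simp
  have hq0 : ∀ l, 0 ≤ l → hq Δ g 0 l = 0 := by
    intro l hl
    refine le_antisymm (hq_le hΔ fun x hx => ?_) (hq_nonneg hΔ hm hmM hadm)
    rw [hE0 x hx]
    have := mul_nonneg hl hx.1
    linarith
  have : ∀ l ∈ Ioc m M, hq Δ g 0 l / l^2 = 0 := by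
    intro l hl
    rw [hq0 l (le_of_lt (lt_trans hm hl.1))]
    simp
  rw [J, setIntegral_congr_fun measurableSet_Ioc this]
  simp

/-- key step inequality for J -/
lemma J_step (hΔ : 0 < Δ) (hm : 0 < m) (hmM : m ≤ M)
    (hadm : ∀ s < n + 1, Admissible Δ m M (g s)) :
    J Δ m M g (n+1) ≤ J Δ m M g n
      + (E g (n+1) Δ - E g n Δ) * (1/m - 1/(deriv (g n) 0)) := by
  have hadm' : ∀ s < n, Admissible Δ m M (g s) := fun s hs => hadm s (hs.trans n.lt_succ_self)
  set p := deriv (g n) 0 with hpdef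
  have hp : p ∈ Icc m M := (hadm n n.lt_succ_self).2.2.2.2
  set K := E g (n+1) Δ - E g n Δ with hK
  set φ : ℝ → ℝ := fun l => if l ≤ p then K else 0 with hφ
  have hφmeas : Measurable φ := Measurable.ite measurableSet_Iic measurable_const measurable_const
  have hφbd : ∀ l ∈ Ioc m M, |φ l| ≤ |K| := by
    intro l hl
    rw [hφ]
    dsimp only
    split <;> simp
  have hint1 := hq_intOn (n := n+1) hΔ hm hmM hadm
  have hint2 := hq_intOn (n := n) hΔ hm hmM hadm'
  have hintφ : IntegrableOn (fun l => φ l / l^2) (Ioc m M) volume :=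
    intOn hm hφmeas (abs_nonneg K) hφbd
  have hintsum : IntegrableOn (fun l => (hq Δ g n l + φ l) / l^2) (Ioc m M) volume := by
    refine IntegrableOn.congr_fun (hint2.add hintφ) ?_ measurableSet_Ioc
    intro l hl
    have hl0 : l ≠ 0 := ne_of_gt (lt_trans hm hl.1)
    show _ = _
    simp only [Pi.add_apply, add_div]
  -- pointwise bound
  have hpt : ∀ l ∈ Ioc m M, hq Δ g (n+1) l / l^2 ≤ (hq Δ g n l + φ l) / l^2 := by
    intro l hl
    have hlp : 0 < l := lt_trans hm hl.1
    have hl0 : (0:ℝ) < l^2 := pow_pos hlp 2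
    rw [div_le_div_iff_of_pos_right hl0]
    rw [hφ]; dsimp only
    split
    · exact (hq_step_any hΔ hm hmM hadm).trans (by rw [hK])
    · rename_i hlp
      have := hq_step_high hΔ hm hmM hadm (le_of_lt (lt_of_not_ge hlp))
      linarith
  have hmono := setIntegral_mono_on hint1 hintsum measurableSet_Ioc hpt
  -- split the φ integral
  have hsplit : ∫ l in Ioc m M, φ l / l^2 = K * (1/m - 1/p) := by
    have hunion : Ioc m M = Ioc m p ∪ Ioc p M := (Ioc_union_Ioc_eq_Ioc hp.1 hp.2).symm
    have hdisj : Disjoint (Ioc m p) (Ioc p M) := Ioc_disjoint_Ioc_of_le le_rfl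
    have hi1 : IntegrableOn (fun l => φ l / l^2) (Ioc m p) volume :=
      hintφ.mono_set (by rw [hunion]; exact subset_union_left)
    have hi2 : IntegrableOn (fun l => φ l / l^2) (Ioc p M) volume :=
      hintφ.mono_set (by rw [hunion]; exact subset_union_right)
    rw [hunion, setIntegral_union hdisj measurableSet_Ioc hi1 hi2]
    have e1 : ∫ l in Ioc m p, φ l / l^2 = ∫ l in Ioc m p, K * (1/l^2) := by
      refine setIntegral_congr_fun measurableSet_Ioc fun l hl => ?_
      rw [hφ]; dsimp only
      rw [if_pos hl.2]; ring
    have e2 : ∫ l in Ioc p M, φ l / l^2 = 0 := by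
      rw [setIntegral_congr_fun (g := fun _ => (0:ℝ)) measurableSet_Ioc fun l hl => ?_]
      · simp
      · rw [hφ]; dsimp only
        rw [if_neg (not_le.2 hl.1)]
        simp
    rw [e1, e2, integral_const_mul, add_zero]
    have : ∫ l in Ioc m p, 1/l^2 = 1/m - 1/p := int_inv_sq hm hp.1
    rw [show (∫ l in Ioc m p, (1:ℝ)/l^2) = ∫ l in Ioc m p, 1/l^2 from rfl] at this
    rw [this]
  have hadd : ∫ l in Ioc m M, (hq Δ g n l + φ l) / l^2
      = J Δ m M g n + ∫ l in Ioc m M, φ l / l^2 := by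
    rw [show (∫ l in Ioc m M, (hq Δ g n l + φ l) / l^2)
        = ∫ l in Ioc m M, (hq Δ g n l / l^2 + φ l / l^2) from
      setIntegral_congr_fun measurableSet_Ioc fun l hl => by
        have : l ≠ 0 := ne_of_gt (lt_trans hm hl.1)
        field_simp]
    rw [integral_add hint2 hintφ]
    rfl
  calc J Δ m M g (n+1) ≤ ∫ l in Ioc m M, (hq Δ g n l + φ l) / l^2 := hmono
    _ = J Δ m M g n + K * (1/m - 1/p) := by rw [hadd, hsplit]

end Part4

-- Part 5: final bound
namespace Part5
open CRP Part3 Part4 MeasureTheory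

variable {Δ m M : ℝ} {g : ℕ → ℝ → ℝ} {n T : ℕ}

noncomputable def Phi (Δ m M : ℝ) (g : ℕ → ℝ → ℝ) (n : ℕ) : ℝ :=
  E g n Δ * (1/m) - J Δ m M g n

lemma E_nil (hΔ : 0 < Δ) (hm : 0 < m) (hmM : m ≤ M) {x : ℝ} (hx : x ∈ Icc (0:ℝ) Δ) :
    E g 0 x = 0 := by
  have hadm : ∀ s < 0, Admissible Δ m M (g s) := fun s hs => absurd hs (Nat.not_lt_zero s)
  refine le_antisymm (csSup_le ⟨0, zero_mem_S hadm hx.1⟩ ?_)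
    (le_E hΔ hm hmM hadm hx.2 (zero_mem_S hadm hx.1))
  rintro r ⟨v, -, -, rfl⟩
  simp

lemma Phi_zero (hΔ : 0 < Δ) (hm : 0 < m) (hmM : m ≤ M) :
    Phi Δ m M g 0 = 0 := by
  rw [Phi, E_nil hΔ hm hmM (right_mem_Icc.2 hΔ.le), J_zero hΔ hm hmM]
  simp

lemma Phi_step (hΔ : 0 < Δ) (hm : 0 < m) (hmM : m ≤ M)
    (hadm : ∀ s < n + 1, Admissible Δ m M (g s)) :
    (E g (n+1) Δ - E g n Δ) / (deriv (g n) 0) ≤ Phi Δ m M g (n+1) - Phi Δ m M g n := by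
  have hstep := J_step hΔ hm hmM hadm
  set p := deriv (g n) 0 with hpdef
  have hp : p ∈ Icc m M := (hadm n n.lt_succ_self).2.2.2.2
  have hp0 : 0 < p := lt_of_lt_of_le hm hp.1
  set K := E g (n+1) Δ - E g n Δ with hK
  have h1 : K * (1/m - 1/p) = K * (1/m) - K / p := by ring
  rw [Phi, Phi]
  have h2 : (E g (n+1) Δ) * (1/m) - (E g n Δ) * (1/m) = K * (1/m) := by rw [hK]; ring
  linarith [hstep, h1.le, h1.ge, h2.le, h2.ge]

/-- final potential bound -/
lemma Phi_le (hΔ : 0 < Δ) (hm : 0 < m) (hmM : m ≤ M)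
    (hadm : ∀ s < T, Admissible Δ m M (g s)) :
    Phi Δ m M g T ≤ Δ * (Real.log (M/m) + 1) := by
  have hM : 0 < M := lt_of_lt_of_le hm hmM
  set A := E g T Δ with hA
  have hΔmem : Δ ∈ Icc (0:ℝ) Δ := right_mem_Icc.2 hΔ.le
  have hA0 : 0 ≤ A := E_nonneg hΔ hm hmM hadm hΔmem
  have hAM : A ≤ M * Δ := E_le_linear hΔ hm hmM hadm hΔmem
  -- pointwise: A ≤ hq λ + λΔ
  have hpt : ∀ l ∈ Ioc m M, A ≤ hq Δ g T l + l * Δ := by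
    intro l hl
    have := le_hq (lam := l) hΔ hm hmM hadm hΔmem
    linarith
  -- integrability facts
  have hint_hq := hq_intOn (n := T) hΔ hm hmM hadm
  have hintA : IntegrableOn (fun l => A / l^2) (Ioc m M) volume :=
    intOn hm measurable_const hA0 (fun l hl => by rw [abs_of_nonneg hA0])
  have hintlin : IntegrableOn (fun l => (l * Δ) / l^2) (Ioc m M) volume := by
    refine intOn hm (measurable_id.mul_const Δ) (C := M * Δ) (by positivity) fun l hl => ?_
    have hl0 : 0 < l := lt_trans hm hl.1
    rw [abs_of_nonneg (by positivity)]
    exact mul_le_mul_of_nonneg_right hl.2 hΔ.le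
  have hintsum : IntegrableOn (fun l => (hq Δ g T l + l * Δ) / l^2) (Ioc m M) volume := by
    refine IntegrableOn.congr_fun (hint_hq.add hintlin) ?_ measurableSet_Ioc
    intro l hl
    have hl0 : l ≠ 0 := ne_of_gt (lt_trans hm hl.1)
    show _ = _
    simp only [Pi.add_apply, add_div]
  -- A * (1/m - 1/M) = ∫ A/λ²
  have hAint : ∫ l in Ioc m M, A / l^2 = A * (1/m - 1/M) := by
    have : ∀ l ∈ Ioc m M, A / l^2 = A * (1/l^2) := fun l hl => by ring
    rw [setIntegral_congr_fun measurableSet_Ioc this, integral_const_mul, int_inv_sq hm hmM]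
  -- monotone comparison
  have hmono : ∫ l in Ioc m M, A / l^2 ≤ ∫ l in Ioc m M, (hq Δ g T l + l * Δ) / l^2 := by
    refine setIntegral_mono_on hintA hintsum measurableSet_Ioc fun l hl => ?_
    have hl0 : (0:ℝ) < l^2 := pow_pos (lt_trans hm hl.1) 2
    exact div_le_div_of_nonneg_right (hpt l hl) hl0.le
  -- compute RHS integral
  have hsplit : ∫ l in Ioc m M, (hq Δ g T l + l * Δ) / l^2
      = J Δ m M g T + Δ * Real.log (M/m) := by
    have hcong : ∀ l ∈ Ioc m M, (hq Δ g T l + l * Δ) / l^2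
        = hq Δ g T l / l^2 + Δ * l⁻¹ := by
      intro l hl
      have hl0 : l ≠ 0 := ne_of_gt (lt_trans hm hl.1)
      field_simp
    have hintlin' : IntegrableOn (fun l => Δ * l⁻¹) (Ioc m M) volume := by
      refine IntegrableOn.congr_fun hintlin ?_ measurableSet_Ioc
      intro l hl
      have hl0 : l ≠ 0 := ne_of_gt (lt_trans hm hl.1)
      show _ = _
      field_simp
    rw [setIntegral_congr_fun measurableSet_Ioc hcong, integral_add hint_hq hintlin',
      integral_const_mul, int_inv' hm hmM]
    rfl
  -- assemble
  have hchain : A * (1/m - 1/M) ≤ J Δ m M g T + Δ * Real.log (M/m) := by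
    rw [← hAint, ← hsplit]; exact hmono
  have hAoverM : A * (1/M) ≤ Δ := by
    rw [mul_one_div]
    exact (div_le_iff₀ hM).2 (by linarith)
  rw [Phi]
  have : A * (1/m) = A * (1/m - 1/M) + A * (1/M) := by ring
  rw [← hA] at *
  linarith

end Part5

open CRP Part3 Part4 Part5 in
/-- Theorem 5 of the paper: the total inventory used by CR-Pursuit(π) is at most
(cΔ/π)(ln θ + 1); in particular CR-Pursuit(c(ln θ + 1)) is feasible. -/
theorem stmt12 (Δ m M : ℝ) (hΔ : 0 < Δ) (hm : 0 < m) (hmM : m ≤ M)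
    (pi : ℝ) (hpi : 1 ≤ pi) (T : ℕ) (g : ℕ → ℝ → ℝ)
    (hg : ∀ t < T, Admissible Δ m M (g t))
    (vb : ℕ → ℝ) (htraj : CRTraj Δ g T pi vb)
    (vhat : ℕ → ℝ)
    (hvhat : ∀ t < T, vhat t ∈ Set.Ioc 0 Δ ∧ IsMaxOn (g t) (Set.Icc 0 Δ) (vhat t) ∧
      0 < g t (vhat t))
    (hle : ∀ t < T, vb t ≤ vhat t)
    (c : ℝ) (hc : 1 ≤ c)
    (hcb : ∀ t < T, deriv (g t) 0 * vhat t ≤ c * g t (vhat t)) :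
    ∑ t ∈ Finset.range T, vb t ≤ (c * Δ / pi) * (Real.log (M / m) + 1) ∧
    (pi = c * (Real.log (M / m) + 1) → ∑ t ∈ Finset.range T, vb t ≤ Δ) := by
  have hM : 0 < M := lt_of_lt_of_le hm hmM
  have hpi0 : 0 < pi := lt_of_lt_of_le one_pos hpi
  have hc0 : 0 < c := lt_of_lt_of_le one_pos hc
  have hlog : 0 ≤ Real.log (M / m) := Real.log_nonneg ((one_le_div hm).2 hmM)
  have heta : ∀ n, eta Δ g n = E g n Δ := fun n => rfl
  -- the key per-step bound
  have key : ∀ t < T, vb t ≤ (c / pi) * (Phi Δ m M g (t+1) - Phi Δ m M g t) := by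
    intro t ht
    set p := deriv (g t) 0 with hpdef
    have hp : p ∈ Set.Icc m M := (hg t ht).2.2.2.2
    have hp0 : 0 < p := lt_of_lt_of_le hm hp.1
    obtain ⟨hvbmem, htr⟩ := htraj t ht
    obtain ⟨hvhmem, hmax, hpos⟩ := hvhat t ht
    set K := E g (t+1) Δ - E g t Δ with hK
    have htr' : pi * g t (vb t) = K := by rw [← heta, ← heta] at *; exact htr
    -- chord bound : (vb t / vhat t) * g t (vhat t) ≤ g t (vb t)
    have hchord := adm_chord hΔ (hg t ht) hvhmem.1 hvhmem.2 hvbmem.1 (hle t ht)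
    -- hcb: p * vhat t ≤ c * g t (vhat t)
    have hcbt := hcb t ht
    have hvh0 : (0:ℝ) < vhat t := hvhmem.1
    have hgvb : vb t * p / c ≤ g t (vb t) := by
      have h1 : vb t / vhat t * (p * vhat t / c) ≤ vb t / vhat t * g t (vhat t) := by
        refine mul_le_mul_of_nonneg_left ?_ (div_nonneg hvbmem.1 hvh0.le)
        exact (div_le_iff₀ hc0).2 (by linarith)
      have h2 : vb t / vhat t * (p * vhat t / c) = vb t * p / c := by
        field_simp
      linarith [h1.trans hchord, h2.ge, h2.le]
    have hKge : pi * (vb t * p / c) ≤ K := by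
      rw [← htr']
      exact mul_le_mul_of_nonneg_left hgvb (by linarith)
    have hvbK : vb t ≤ (c / pi) * (K / p) := by
      rw [show (c / pi) * (K / p) = c * K / (pi * p) by ring]
      rw [le_div_iff₀ (by positivity)]
      have : pi * (vb t * p / c) * c = vb t * (pi * p) := by field_simp
      nlinarith [hKge]
    refine hvbK.trans ?_
    refine mul_le_mul_of_nonneg_left ?_ (by positivity)
    rw [hK]
    exact Phi_step hΔ hm hmM (fun s hs => hg s (lt_of_lt_of_le hs ht))
  -- sum up
  have hsum : ∑ t ∈ Finset.range T, vb t ≤ (c / pi) * (Phi Δ m M g T - Phi Δ m M g 0) := by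
    calc ∑ t ∈ Finset.range T, vb t
        ≤ ∑ t ∈ Finset.range T, (c / pi) * (Phi Δ m M g (t+1) - Phi Δ m M g t) :=
          Finset.sum_le_sum fun t ht => key t (Finset.mem_range.1 ht)
      _ = (c / pi) * ∑ t ∈ Finset.range T, (Phi Δ m M g (t+1) - Phi Δ m M g t) := by
          rw [Finset.mul_sum]
      _ = (c / pi) * (Phi Δ m M g T - Phi Δ m M g 0) := by
          rw [Finset.sum_range_sub (fun n => Phi Δ m M g n)]
  have hPhi0 : Phi Δ m M g 0 = 0 := Phi_zero hΔ hm hmM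
  have hPhiT : Phi Δ m M g T ≤ Δ * (Real.log (M/m) + 1) := Phi_le hΔ hm hmM hg
  have main : ∑ t ∈ Finset.range T, vb t ≤ (c * Δ / pi) * (Real.log (M / m) + 1) := by
    calc ∑ t ∈ Finset.range T, vb t ≤ (c / pi) * (Phi Δ m M g T - Phi Δ m M g 0) := hsum
      _ ≤ (c / pi) * (Δ * (Real.log (M/m) + 1)) := by
          refine mul_le_mul_of_nonneg_left ?_ (by positivity)
          rw [hPhi0]; linarith
      _ = (c * Δ / pi) * (Real.log (M / m) + 1) := by ring
  refine ⟨main, fun hpieq => ?_⟩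
  have h1 : (0:ℝ) < Real.log (M / m) + 1 := by linarith
  calc ∑ t ∈ Finset.range T, vb t ≤ (c * Δ / pi) * (Real.log (M / m) + 1) := main
    _ = Δ := by
        rw [hpieq]
        field_simp
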